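/- Let σ, σs : [0,L] → ℝ be measurable with 0 ≤ σs ≤ σ pointwise, and let w : [0,L] → ℝ be integrable. Then ∫₀ᴸ σs(t) ∫₀ᵗ exp(-∫ₛᵗ σ(r) dr) |w(s)| ds dt ≤ (1 - exp(-‖σs‖_∞ L)) ∫₀ᴸ |w(s)| ds, where ‖σs‖_∞ is an essential upper bound of σs on [0,L]. -/

import Mathlib

open MeasureTheory intervalIntegral Real Set
open scoped NNReal ENNReal

namespace Stmt4Aux

noncomputable def Nfun (c : ℝ) : ℝ → ℝ := fun u => max 0 (min (Real.log u⁻¹) c)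

lemma Nfun_meas (c : ℝ) : Measurable (Nfun c) :=
  measurable_const.max ((Real.measurable_log.comp measurable_inv).min measurable_const)

lemma Nfun_nonneg (c : ℝ) (u : ℝ) : 0 ≤ Nfun c u := le_max_left _ _

lemma Nfun_le (c : ℝ) (hc : 0 ≤ c) (u : ℝ) : Nfun c u ≤ c :=
  max_le hc (min_le_right _ _)

lemma Nfun_zero_of_one_lt (c : ℝ) (u : ℝ) (hu : 1 ≤ u) : Nfun c u = 0 := by
  have h1 : Real.log u⁻¹ ≤ 0 := by
    rw [Real.log_inv]
    simpa using Real.log_nonneg hu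
  have : min (Real.log u⁻¹) c ≤ 0 := le_trans (min_le_left _ _) h1
  exact max_eq_left this

lemma Nfun_integrableOn (c : ℝ) (hc : 0 ≤ c) :
    IntegrableOn (Nfun c) (Ioi 0) := by
  rw [← Ioc_union_Ioi_eq_Ioi (zero_le_one (α := ℝ))]
  refine IntegrableOn.union ?_ ?_
  · refine Measure.integrableOn_of_bounded (M := c) ?_ ((Nfun_meas c).aestronglyMeasurable) ?_
    · simp [Real.volume_Ioc]
    · filter_upwards with u
      rw [Real.norm_eq_abs, abs_of_nonneg (Nfun_nonneg c u)]
      exact Nfun_le c hc u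
  · have : EqOn (Nfun c) 0 (Ioi 1) := fun u hu => Nfun_zero_of_one_lt c u (le_of_lt hu)
    exact (integrableOn_congr_fun this measurableSet_Ioi).mpr (integrableOn_zero)

lemma Nfun_integral (c : ℝ) (hc : 0 ≤ c) :
    ∫ u in Ioi (0:ℝ), Nfun c u = 1 - Real.exp (-c) := by
  have ha0 : (0:ℝ) < Real.exp (-c) := Real.exp_pos _
  have ha1 : Real.exp (-c) ≤ 1 := Real.exp_le_one_iff.mpr (by linarith)
  rw [← Ioc_union_Ioi_eq_Ioi (zero_le_one (α := ℝ))]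
  rw [setIntegral_union (Ioc_disjoint_Ioi le_rfl) measurableSet_Ioi
    ((Nfun_integrableOn c hc).mono_set Ioc_subset_Ioi_self)
    ((Nfun_integrableOn c hc).mono_set (Ioi_subset_Ioi zero_le_one))]
  have h2 : ∫ u in Ioi (1:ℝ), Nfun c u = 0 := by
    rw [setIntegral_congr_fun measurableSet_Ioi (fun u hu => Nfun_zero_of_one_lt c u (le_of_lt hu))]
    simp
  rw [h2, add_zero]
  rw [← Ioc_union_Ioc_eq_Ioc (le_of_lt ha0) ha1]
  rw [setIntegral_union (Ioc_disjoint_Ioc.mpr (le_trans (min_le_left _ _) (le_max_right _ _)))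
    measurableSet_Ioc
    ((Nfun_integrableOn c hc).mono_set Ioc_subset_Ioi_self)
    ((Nfun_integrableOn c hc).mono_set (Ioc_subset_Ioi_self.trans (Ioi_subset_Ioi (le_of_lt ha0))))]
  have h3 : ∫ u in Ioc (0:ℝ) (Real.exp (-c)), Nfun c u = c * Real.exp (-c) := by
    rw [setIntegral_congr_fun measurableSet_Ioc (g := fun _ => c)]
    · simp [Real.volume_Ioc, ENNReal.toReal_ofReal (le_of_lt ha0), mul_comm]; exact Or.inl (le_of_lt ha0)
    · intro u hu
      have hu0 : 0 < u := hu.1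
      have : c ≤ Real.log u⁻¹ := by
        rw [Real.log_inv, le_neg]
        calc Real.log u ≤ Real.log (Real.exp (-c)) := Real.log_le_log hu0 hu.2
        _ = -c := Real.log_exp _
      show Nfun c u = c
      unfold Nfun
      rw [min_eq_right this, max_eq_right hc]
  have h4 : ∫ u in Ioc (Real.exp (-c)) 1, Nfun c u = 1 - Real.exp (-c) - c * Real.exp (-c) := by
    rw [setIntegral_congr_fun measurableSet_Ioc (g := fun u => -Real.log u)]
    · rw [← intervalIntegral.integral_of_le ha1, intervalIntegral.integral_neg,
        integral_log]
      simp [Real.log_exp]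
      ring
    · intro u hu
      have hu0 : 0 < u := lt_trans ha0 hu.1
      have hlogle : Real.log u⁻¹ ≤ c := by
        rw [Real.log_inv, neg_le]
        calc -c = Real.log (Real.exp (-c)) := (Real.log_exp _).symm
        _ ≤ Real.log u := Real.log_le_log ha0 (le_of_lt hu.1)
      have hlog0 : 0 ≤ Real.log u⁻¹ := by
        rw [Real.log_inv]
        simpa using Real.log_nonpos (le_of_lt hu0) hu.2
      show Nfun c u = -Real.log u
      unfold Nfun
      rw [min_eq_left hlogle, max_eq_right hlog0, Real.log_inv]
  rw [h3, h4]; ring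

lemma key_bound (ρ : ℝ → ℝ) (M s L : ℝ) (hρm : Measurable ρ) (hρint : Integrable ρ)
    (h0 : ∀ x, 0 ≤ ρ x) (hMb : ∀ x, ρ x ≤ M) (hs : 0 ≤ s) (hsL : s ≤ L) :
    ∫ t in Ioc s L, ρ t * Real.exp ((∫ u in (0:ℝ)..s, ρ u) - ∫ u in (0:ℝ)..t, ρ u)
      ≤ 1 - Real.exp (-(M * L)) := by
  set F : ℝ → ℝ := fun x => ∫ u in (0:ℝ)..x, ρ u with hF
  have hFsub : ∀ a b : ℝ, F b - F a = ∫ u in a..b, ρ u := fun a b =>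
    intervalIntegral.integral_interval_sub_left hρint.intervalIntegrable
      hρint.intervalIntegrable
  have hFc : Continuous F := hρint.continuous_primitive 0
  have hFmono : Monotone F := by
    intro a b hab
    have h1 : 0 ≤ ∫ u in a..b, ρ u := intervalIntegral.integral_nonneg hab (fun u _ => h0 u)
    have := hFsub a b
    linarith
  have hM0 : 0 ≤ M := le_trans (h0 0) (hMb 0)
  have hL0 : 0 ≤ L := le_trans hs hsL
  have hc0 : 0 ≤ M * L := mul_nonneg hM0 hL0
  set c := M * L with hcdef
  set g : ℝ → ℝ := fun t => Real.exp (F s - F t) with hg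
  have hgmeas : Measurable g := (Real.continuous_exp.comp (continuous_const.sub hFc)).measurable
  set f : ℝ → ℝ≥0 := fun t => (ρ t).toNNReal with hfd
  have hfmeas : Measurable f := hρm.real_toNNReal
  set ν : Measure ℝ := (volume.restrict (Ioc s L)).withDensity (fun t => (f t : ℝ≥0∞)) with hν
  have hνac : ν ≪ volume.restrict (Ioc s L) := withDensity_absolutelyContinuous _ _
  have hνmem : ∀ᵐ t ∂ν, t ∈ Ioc s L := hνac.ae_le (ae_restrict_mem measurableSet_Ioc)
  have hIddens : ∫ t, g t ∂ν = ∫ t in Ioc s L, ρ t * g t := by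
    rw [hν, integral_withDensity_eq_integral_smul hfmeas]
    refine setIntegral_congr_fun measurableSet_Ioc (fun t _ => ?_)
    simp [hfd, NNReal.smul_def, Real.coe_toNNReal _ (h0 t)]
  have hνfin : IsFiniteMeasure ν := by
    constructor
    rw [hν, withDensity_apply _ MeasurableSet.univ, Measure.restrict_univ]
    calc ∫⁻ t in Ioc s L, (f t : ℝ≥0∞) ∂volume
        ≤ ∫⁻ _ in Ioc s L, ENNReal.ofReal M ∂volume := by
          refine lintegral_mono (fun t => ?_)
          exact ENNReal.coe_le_coe.mpr (Real.toNNReal_mono (hMb t))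
      _ = ENNReal.ofReal M * volume (Ioc s L) := by
          rw [lintegral_const]; rw [Measure.restrict_apply MeasurableSet.univ, Set.univ_inter]
      _ < ⊤ := ENNReal.mul_lt_top ENNReal.ofReal_lt_top (by simp [Real.volume_Ioc])
  have hgint : Integrable g ν := by
    refine ⟨hgmeas.aestronglyMeasurable, ?_⟩
    refine HasFiniteIntegral.of_bounded (C := 1) ?_
    filter_upwards [hνmem] with t ht
    rw [hg, Real.norm_eq_abs, abs_of_nonneg (le_of_lt (Real.exp_pos _))]
    exact Real.exp_le_one_iff.mpr (by have := hFmono (le_of_lt ht.1); linarith)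
  have hgnn : 0 ≤ᵐ[ν] g := Filter.Eventually.of_forall (fun t => le_of_lt (Real.exp_pos _))
  have hmeasbd : ∀ u : ℝ, 0 < u → (ν {a | u < g a}).toReal ≤ Nfun c u := by
    intro u hu
    have hSmeas : MeasurableSet {a | u < g a} := measurableSet_lt measurable_const hgmeas
    have hνS : ν {a | u < g a} = ∫⁻ t in {a | u < g a} ∩ Ioc s L, (f t : ℝ≥0∞) ∂volume := by
      rw [hν, withDensity_apply _ hSmeas, Measure.restrict_restrict hSmeas]
    rcases le_or_gt u 1 with hu1 | hu1
    · set y := Real.log u⁻¹ with hy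
      have hy0 : 0 ≤ y := by
        rw [hy, Real.log_inv]
        simpa using Real.log_nonpos (le_of_lt hu) hu1
      set T := Icc s L ∩ (fun x => F x - F s) ⁻¹' (Iic y) with hT
      have hTne : T.Nonempty := ⟨s, ⟨⟨le_rfl, hsL⟩, by simp [Set.mem_preimage, hy0]⟩⟩
      have hTbdd : BddAbove T := ⟨L, fun x hx => hx.1.2⟩
      have hTclosed : IsClosed T :=
        isClosed_Icc.inter (IsClosed.preimage (hFc.sub continuous_const) isClosed_Iic)
      set x₀ := sSup T with hx₀
      have hx₀T : x₀ ∈ T := hTclosed.csSup_mem hTne hTbdd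
      have hsx₀ : s ≤ x₀ := hx₀T.1.1
      have hSsub : {a | u < g a} ∩ Ioc s L ⊆ Ioc s x₀ := by
        rintro t ⟨htS, htIoc⟩
        have h1 : Real.log u < F s - F t := by
          have := Real.log_lt_log hu htS
          rwa [Real.log_exp] at this
        have h2 : F t - F s ≤ y := by
          rw [hy, Real.log_inv]; linarith
        exact ⟨htIoc.1, le_csSup hTbdd ⟨⟨le_of_lt htIoc.1, htIoc.2⟩, h2⟩⟩
      have hint : IntegrableOn ρ (Ioc s x₀) := hρint.integrableOn
      have hνS_le : ν {a | u < g a} ≤ ENNReal.ofReal (F x₀ - F s) := by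
        rw [hνS]
        calc ∫⁻ t in {a | u < g a} ∩ Ioc s L, (f t : ℝ≥0∞) ∂volume
            ≤ ∫⁻ t in Ioc s x₀, (f t : ℝ≥0∞) ∂volume := lintegral_mono_set hSsub
          _ = ∫⁻ t in Ioc s x₀, ENNReal.ofReal (ρ t) ∂volume := by
              refine lintegral_congr (fun t => ?_)
              rw [hfd, ENNReal.ofReal]
          _ = ENNReal.ofReal (∫ t in Ioc s x₀, ρ t) := by
              rw [← ofReal_integral_eq_lintegral_ofReal hint
                (Filter.Eventually.of_forall (fun t => h0 t))]
          _ = ENNReal.ofReal (F x₀ - F s) := by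
              rw [hFsub s x₀, intervalIntegral.integral_of_le hsx₀]
      have hFxy : F x₀ - F s ≤ y := hx₀T.2
      have hFxc : F x₀ - F s ≤ c := by
        have h1 : F x₀ ≤ F L := hFmono hx₀T.1.2
        have h2 : F L - F s = ∫ t in Ioc s L, ρ t := by
          rw [hFsub s L, intervalIntegral.integral_of_le hsL]
        have h3 : ∫ t in Ioc s L, ρ t ≤ ∫ _ in Ioc s L, M := by
          refine setIntegral_mono_on hρint.integrableOn ((integrableOn_const_iff (C := M)).mpr ?_)
            measurableSet_Ioc (fun t _ => hMb t)
          right; simp [Real.volume_Ioc]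
        have h4 : ∫ _ in Ioc s L, M ∂volume = (L - s) * M := by
          rw [setIntegral_const]
          simp [Real.volume_Ioc, ENNReal.toReal_ofReal (by linarith : (0:ℝ) ≤ L - s), smul_eq_mul]; exact Or.inl hsL
        nlinarith
      calc (ν {a | u < g a}).toReal
          ≤ (ENNReal.ofReal (F x₀ - F s)).toReal :=
            ENNReal.toReal_mono ENNReal.ofReal_ne_top hνS_le
        _ = F x₀ - F s := ENNReal.toReal_ofReal (by have := hFmono hsx₀; linarith)
        _ ≤ min y c := le_min hFxy hFxc
        _ ≤ Nfun c u := le_max_right _ _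
    · have hempty : {a | u < g a} ∩ Ioc s L = ∅ := by
        ext t
        simp only [Set.mem_inter_iff, Set.mem_setOf_eq, Set.mem_empty_iff_false, iff_false,
          not_and]
        intro htS htIoc
        have hg1 : g t ≤ 1 := Real.exp_le_one_iff.mpr
          (by have := hFmono (le_of_lt htIoc.1); linarith)
        linarith
      rw [hνS, hempty]
      simp only [Measure.restrict_empty, lintegral_zero_measure, ENNReal.toReal_zero]
      exact le_max_left _ _
  calc ∫ t in Ioc s L, ρ t * Real.exp ((∫ u in (0:ℝ)..s, ρ u) - ∫ u in (0:ℝ)..t, ρ u)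
      = ∫ t, g t ∂ν := hIddens.symm
    _ = ∫ u in Ioi (0:ℝ), (ν {a | u < g a}).toReal := hgint.integral_eq_integral_meas_lt hgnn
    _ ≤ ∫ u in Ioi (0:ℝ), Nfun c u := by
        refine integral_mono_of_nonneg (Filter.Eventually.of_forall ?_)
          ((Nfun_integrableOn c hc0)) ?_
        · exact fun u => ENNReal.toReal_nonneg
        · filter_upwards [ae_restrict_mem measurableSet_Ioi] with u hu
          exact hmeasbd u hu
    _ = 1 - Real.exp (-c) := Nfun_integral c hc0

end Stmt4Aux

open Stmt4Aux

/-- One-dimensional L¹ contraction estimate for `𝓚𝓛`: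
`∫₀ᴸ σs(t) ∫₀ᵗ exp(-∫ₛᵗ σ) |w(s)| ds dt ≤ (1 - e^{-M L}) ∫₀ᴸ |w|`. -/
theorem stmt4 (σ σs w : ℝ → ℝ) (L M : ℝ) (hL : 0 ≤ L)
    (hσmeas : Measurable σ) (hσsmeas : Measurable σs)
    (hσs_nonneg : ∀ s ∈ Icc 0 L, 0 ≤ σs s)
    (hle : ∀ s ∈ Icc 0 L, σs s ≤ σ s)
    (hM : ∀ᵐ s ∂(volume.restrict (Icc 0 L)), σs s ≤ M)
    (hσint : IntegrableOn σ (Icc 0 L))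
    (hwint : IntegrableOn w (Icc 0 L)) :
    (∫ t in (0:ℝ)..L, σs t * ∫ s in (0:ℝ)..t, Real.exp (-(∫ r in s..t, σ r)) * |w s|)
      ≤ (1 - Real.exp (-(M * L))) * ∫ s in (0:ℝ)..L, |w s| := by
  rcases hL.eq_or_lt with rfl | hL0
  · simp
  -- M is nonnegative
  haveI hne : (ae (volume.restrict (Icc (0:ℝ) L))).NeBot := by
    refine ae_neBot.mpr ?_
    rw [Ne, Measure.restrict_eq_zero]
    simp only [Real.volume_Icc, sub_zero]
    intro h
    exact absurd (ENNReal.ofReal_eq_zero.mp h) (not_le.mpr hL0)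
  have hM0 : 0 ≤ M := by
    obtain ⟨x, hx1, hx2⟩ := (hM.and (ae_restrict_mem measurableSet_Icc)).exists
    exact le_trans (hσs_nonneg x hx2) hx1
  -- σs is integrable on [0, L]
  have hσsIcc : IntegrableOn σs (Icc 0 L) := by
    refine Measure.integrableOn_of_bounded (M := M) (by simp [Real.volume_Icc])
      hσsmeas.aestronglyMeasurable ?_
    filter_upwards [hM, ae_restrict_mem measurableSet_Icc] with x h1 h2
    rw [Real.norm_eq_abs, abs_of_nonneg (hσs_nonneg x h2)]
    exact h1
  have hσs_ii : IntervalIntegrable σs volume 0 L := by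
    rw [intervalIntegrable_iff_integrableOn_Ioc_of_le hL]
    exact hσsIcc.mono_set Ioc_subset_Icc_self
  -- the modified coefficient ρ and the indicator version of σ
  set ρ : ℝ → ℝ := (Icc 0 L).indicator (fun t => min (σs t) M) with hρdef
  have hρm : Measurable ρ := (hσsmeas.min measurable_const).indicator measurableSet_Icc
  have hρ0 : ∀ x, 0 ≤ ρ x := by
    intro x
    by_cases hx : x ∈ Icc 0 L
    · rw [hρdef, indicator_of_mem hx]; exact le_min (hσs_nonneg x hx) hM0
    · rw [hρdef, indicator_of_notMem hx]
  have hρM : ∀ x, ρ x ≤ M := by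
    intro x
    by_cases hx : x ∈ Icc 0 L
    · rw [hρdef, indicator_of_mem hx]; exact min_le_right _ _
    · rw [hρdef, indicator_of_notMem hx]; exact hM0
  have hρint : Integrable ρ := by
    rw [hρdef]
    refine IntegrableOn.integrable_indicator ?_ measurableSet_Icc
    refine Measure.integrableOn_of_bounded (M := M) (by simp [Real.volume_Icc])
      ((hσsmeas.min measurable_const).aestronglyMeasurable) ?_
    filter_upwards [ae_restrict_mem measurableSet_Icc] with x hx
    rw [Real.norm_eq_abs, abs_of_nonneg (le_min (hσs_nonneg x hx) hM0)]
    exact min_le_right _ _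
  set σt : ℝ → ℝ := (Icc 0 L).indicator σ with hσtdef
  have hσtint : Integrable σt := hσint.integrable_indicator measurableSet_Icc
  have hσt0 : ∀ x, 0 ≤ σt x := by
    intro x
    by_cases hx : x ∈ Icc 0 L
    · rw [hσtdef, indicator_of_mem hx]; exact le_trans (hσs_nonneg x hx) (hle x hx)
    · rw [hσtdef, indicator_of_notMem hx]
  have hρσt : ∀ x, ρ x ≤ σt x := by
    intro x
    by_cases hx : x ∈ Icc 0 L
    · rw [hρdef, hσtdef, indicator_of_mem hx, indicator_of_mem hx]
      exact le_trans (min_le_left _ _) (hle x hx)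
    · rw [hρdef, hσtdef, indicator_of_notMem hx, indicator_of_notMem hx]
  -- primitives
  set F : ℝ → ℝ := fun x => ∫ u in (0:ℝ)..x, ρ u with hFdef
  set G : ℝ → ℝ := fun x => ∫ u in (0:ℝ)..x, σt u with hGdef
  have hFsub : ∀ a b : ℝ, F b - F a = ∫ u in a..b, ρ u := fun a b =>
    intervalIntegral.integral_interval_sub_left hρint.intervalIntegrable
      hρint.intervalIntegrable
  have hGsub : ∀ a b : ℝ, G b - G a = ∫ u in a..b, σt u := fun a b =>
    intervalIntegral.integral_interval_sub_left hσtint.intervalIntegrable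
      hσtint.intervalIntegrable
  have hFc : Continuous F := hρint.continuous_primitive 0
  have hGc : Continuous G := hσtint.continuous_primitive 0
  have hFmono : Monotone F := fun a b hab => by
    have h1 : 0 ≤ ∫ u in a..b, ρ u := intervalIntegral.integral_nonneg hab (fun u _ => hρ0 u)
    have := hFsub a b; linarith
  have hGmono : Monotone G := fun a b hab => by
    have h1 : 0 ≤ ∫ u in a..b, σt u := intervalIntegral.integral_nonneg hab (fun u _ => hσt0 u)
    have := hGsub a b; linarith
  have hFG : ∀ a b : ℝ, a ≤ b → F b - F a ≤ G b - G a := by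
    intro a b hab
    rw [hFsub, hGsub]
    exact intervalIntegral.integral_mono_on hab hρint.intervalIntegrable
      hσtint.intervalIntegrable (fun u _ => hρσt u)
  have hFconst : ∀ x, L ≤ x → F x = F L := by
    intro x hx
    have h := hFsub L x
    have h2 : (∫ u in L..x, ρ u) = 0 := by
      rw [intervalIntegral.integral_of_le hx]
      refine setIntegral_eq_zero_of_forall_eq_zero (fun r hr => ?_)
      rw [hρdef]
      exact indicator_of_notMem (fun hmem => absurd hmem.2 (not_le.mpr hr.1)) _
    linarith
  have hGconst : ∀ x, L ≤ x → G x = G L := by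
    intro x hx
    have h := hGsub L x
    have h2 : (∫ u in L..x, σt u) = 0 := by
      rw [intervalIntegral.integral_of_le hx]
      refine setIntegral_eq_zero_of_forall_eq_zero (fun r hr => ?_)
      rw [hσtdef]
      exact indicator_of_notMem (fun hmem => absurd hmem.2 (not_le.mpr hr.1)) _
    linarith
  have hFleL : ∀ x, F x ≤ F L := fun x => by
    rcases le_total x L with h | h
    · exact hFmono h
    · exact le_of_eq (hFconst x h)
  have hGleL : ∀ x, G x ≤ G L := fun x => by
    rcases le_total x L with h | h
    · exact hGmono h
    · exact le_of_eq (hGconst x h)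
  -- integrability of exp(H s) * |w s|
  have hwIoc : Integrable (fun s => |w s|) (volume.restrict (Ioc 0 L)) :=
    (hwint.mono_set Ioc_subset_Icc_self).abs
  have hwabsIcc : IntegrableOn (fun s => |w s|) (Icc 0 L) := hwint.abs
  have hEw : ∀ (H : ℝ → ℝ), Continuous H → (∀ x, H x ≤ H L) →
      IntegrableOn (fun s => Real.exp (H s) * |w s|) (Icc 0 L) := by
    intro H hHc hHle
    refine Integrable.bdd_mul hwabsIcc ((Real.continuous_exp.comp hHc).aestronglyMeasurable)
      (c := Real.exp (H L)) (Filter.Eventually.of_forall fun x => ?_)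
    rw [Real.norm_eq_abs, abs_of_nonneg (le_of_lt (Real.exp_pos _))]
    exact Real.exp_le_exp.mpr (hHle x)
  -- rewrite the LHS using G
  have hinner : ∀ t ∈ Icc (0:ℝ) L,
      (∫ s in (0:ℝ)..t, Real.exp (-(∫ r in s..t, σ r)) * |w s|)
        = Real.exp (-G t) * ∫ s in (0:ℝ)..t, Real.exp (G s) * |w s| := by
    intro t ht
    rw [← intervalIntegral.integral_const_mul]
    refine intervalIntegral.integral_congr (fun s hs => ?_)
    rw [uIcc_of_le ht.1] at hs
    have h1 : (∫ r in s..t, σ r) = G t - G s := by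
      rw [hGsub s t]
      refine intervalIntegral.integral_congr (fun r hr => ?_)
      rw [uIcc_of_le hs.2] at hr
      rw [hσtdef]
      exact (indicator_of_mem (mem_Icc.mpr ⟨le_trans hs.1 hr.1, le_trans hr.2 ht.2⟩) σ).symm
    rw [h1, show -(G t - G s) = -G t + G s by ring, Real.exp_add, mul_assoc]
  have hR1 : (∫ t in (0:ℝ)..L, σs t * ∫ s in (0:ℝ)..t, Real.exp (-(∫ r in s..t, σ r)) * |w s|)
      = ∫ t in (0:ℝ)..L, σs t * (Real.exp (-G t) * ∫ s in (0:ℝ)..t, Real.exp (G s) * |w s|) := by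
    refine intervalIntegral.integral_congr (fun t ht => ?_)
    rw [uIcc_of_le hL] at ht
    rw [hinner t ht]
  -- integrability of the outer integrands
  have hABint : ∀ (H : ℝ → ℝ), Continuous H → (∀ x, H x ≤ H L) →
      IntervalIntegrable
        (fun t => σs t * (Real.exp (-H t) * ∫ s in (0:ℝ)..t, Real.exp (H s) * |w s|))
        volume 0 L := by
    intro H hHc hHle
    refine IntervalIntegrable.mul_continuousOn hσs_ii ?_
    refine ContinuousOn.mul (Real.continuous_exp.comp hHc.neg).continuousOn ?_
    have h := continuousOn_primitive_interval
      (f := fun s => Real.exp (H s) * |w s|) (a := 0) (b := L) (μ := volume)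
      (by rw [uIcc_of_le hL]; exact hEw H hHc hHle)
    simpa [uIcc_of_le hL] using h
  -- comparison between G and F versions
  have hR2 : (∫ t in (0:ℝ)..L, σs t * (Real.exp (-G t) * ∫ s in (0:ℝ)..t, Real.exp (G s) * |w s|))
      ≤ ∫ t in (0:ℝ)..L, σs t * (Real.exp (-F t) * ∫ s in (0:ℝ)..t, Real.exp (F s) * |w s|) := by
    refine intervalIntegral.integral_mono_on hL (hABint G hGc hGleL) (hABint F hFc hFleL)
      (fun t ht => ?_)
    refine mul_le_mul_of_nonneg_left ?_ (hσs_nonneg t ht)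
    rw [← intervalIntegral.integral_const_mul, ← intervalIntegral.integral_const_mul]
    have hwii : IntervalIntegrable (fun s => |w s|) volume 0 t :=
      (hwabsIcc.mono_set (by rw [uIcc_of_le ht.1]; exact Icc_subset_Icc le_rfl ht.2)).intervalIntegrable
    refine intervalIntegral.integral_mono_on ht.1 ?_ ?_ (fun s hs => ?_)
    · have h := (IntervalIntegrable.continuousOn_mul hwii
        ((Real.continuous_exp.comp hGc).continuousOn)).const_mul (Real.exp (-G t))
      simpa [mul_assoc] using h
    · have h := (IntervalIntegrable.continuousOn_mul hwii
        ((Real.continuous_exp.comp hFc).continuousOn)).const_mul (Real.exp (-F t))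
      simpa [mul_assoc] using h
    · rw [← mul_assoc, ← Real.exp_add, ← mul_assoc, ← Real.exp_add]
      refine mul_le_mul_of_nonneg_right (Real.exp_le_exp.mpr ?_) (abs_nonneg _)
      have := hFG s t hs.2
      linarith
  -- the kernel on the product space
  set Kfun : ℝ × ℝ → ℝ :=
    ({p : ℝ × ℝ | p.2 ≤ p.1}).indicator
      (fun p => σs p.1 * (Real.exp (F p.2 - F p.1) * |w p.2|)) with hKdef
  have hKapp : ∀ t s : ℝ,
      Kfun (t, s) = (Iic t).indicator (fun s => σs t * (Real.exp (F s - F t) * |w s|)) s := by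
    intro t s
    by_cases h : s ≤ t
    · rw [hKdef, indicator_of_mem (by simpa [Set.mem_setOf_eq] using h),
        indicator_of_mem (mem_Iic.mpr h)]
    · rw [hKdef, indicator_of_notMem (by simpa [Set.mem_setOf_eq] using h),
        indicator_of_notMem (fun hh => h (mem_Iic.mp hh))]
  have hKapp' : ∀ s t : ℝ,
      Kfun (t, s) = (Ici s).indicator (fun t => σs t * (Real.exp (F s - F t) * |w s|)) t := by
    intro s t
    by_cases h : s ≤ t
    · rw [hKdef, indicator_of_mem (by simpa [Set.mem_setOf_eq] using h),
        indicator_of_mem (mem_Ici.mpr h)]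
    · rw [hKdef, indicator_of_notMem (by simpa [Set.mem_setOf_eq] using h),
        indicator_of_notMem (fun hh => h (mem_Ici.mp hh))]
  have hwaesm : AEStronglyMeasurable w (volume.restrict (Ioc 0 L)) :=
    hwint.aestronglyMeasurable.mono_measure (Measure.restrict_mono Ioc_subset_Icc_self le_rfl)
  have hKaesm : AEStronglyMeasurable Kfun
      ((volume.restrict (Ioc 0 L)).prod (volume.restrict (Ioc 0 L))) := by
    rw [hKdef]
    refine AEStronglyMeasurable.indicator ?_
      ((isClosed_le continuous_snd continuous_fst).measurableSet)
    refine AEStronglyMeasurable.mul ?_ (AEStronglyMeasurable.mul ?_ ?_)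
    · exact (hσsmeas.comp measurable_fst).aestronglyMeasurable
    · exact (Real.continuous_exp.comp
        ((hFc.comp continuous_snd).sub (hFc.comp continuous_fst))).aestronglyMeasurable
    · exact hwaesm.norm.comp_snd
  set C0 : ℝ := ∫ s in Ioc (0:ℝ) L, |w s| with hC0
  have hKbd : ∀ t ∈ Icc (0:ℝ) L, ∀ s : ℝ, ‖Kfun (t, s)‖ ≤ σs t * |w s| := by
    intro t ht s
    rw [hKapp]
    by_cases h : s ∈ Iic t
    · rw [indicator_of_mem h]
      have hval0 : 0 ≤ σs t * (Real.exp (F s - F t) * |w s|) :=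
        mul_nonneg (hσs_nonneg t ht) (mul_nonneg (le_of_lt (Real.exp_pos _)) (abs_nonneg _))
      rw [Real.norm_eq_abs, abs_of_nonneg hval0]
      refine mul_le_mul_of_nonneg_left ?_ (hσs_nonneg t ht)
      refine mul_le_of_le_one_left (abs_nonneg _) ?_
      exact Real.exp_le_one_iff.mpr (by have := hFmono (mem_Iic.mp h); linarith)
    · rw [indicator_of_notMem h]
      simpa using mul_nonneg (hσs_nonneg t ht) (abs_nonneg (w s))
  have hKint : Integrable Kfun
      ((volume.restrict (Ioc 0 L)).prod (volume.restrict (Ioc 0 L))) := by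
    rw [integrable_prod_iff hKaesm]
    constructor
    · filter_upwards [ae_restrict_mem measurableSet_Ioc] with t ht
      have heq : (fun s => Kfun (t, s))
          = (Iic t).indicator (fun s => σs t * (Real.exp (F s - F t) * |w s|)) :=
        funext (hKapp t)
      rw [heq]
      refine Integrable.indicator ?_ measurableSet_Iic
      have h1 : Integrable (fun s => (σs t * Real.exp (F s - F t)) * |w s|)
          (volume.restrict (Ioc 0 L)) := by
        refine Integrable.bdd_mul hwIoc
          ((measurable_const.mul
            (Real.continuous_exp.comp ((hFc.sub continuous_const))).measurable).aestronglyMeasurable)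
          (c := |σs t| * Real.exp (F L - F t)) (Filter.Eventually.of_forall fun x => ?_)
        rw [Real.norm_eq_abs, abs_mul, abs_of_nonneg (le_of_lt (Real.exp_pos _))]
        exact mul_le_mul_of_nonneg_left (Real.exp_le_exp.mpr (by linarith [hFleL x]))
          (abs_nonneg _)
      exact h1.congr (Filter.Eventually.of_forall (fun s => by ring))
    · refine Integrable.mono' (g := fun t => σs t * C0)
        ((hσsIcc.mono_set Ioc_subset_Icc_self).mul_const _)
        hKaesm.norm.integral_prod_right' ?_
      filter_upwards [ae_restrict_mem measurableSet_Ioc] with t ht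
      rw [Real.norm_eq_abs, abs_of_nonneg (integral_nonneg (fun s => norm_nonneg _))]
      calc ∫ s in Ioc (0:ℝ) L, ‖Kfun (t, s)‖
          ≤ ∫ s in Ioc (0:ℝ) L, σs t * |w s| := by
            refine integral_mono_of_nonneg (Filter.Eventually.of_forall (fun s => norm_nonneg _))
              (hwIoc.const_mul _) (Filter.Eventually.of_forall (fun s => ?_))
            exact hKbd t (mem_Icc.mpr ⟨le_of_lt ht.1, ht.2⟩) s
        _ = σs t * C0 := by rw [MeasureTheory.integral_const_mul, hC0]
  -- reduce AF to the double integral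
  have hR3 : (∫ t in (0:ℝ)..L, σs t * (Real.exp (-F t) * ∫ s in (0:ℝ)..t, Real.exp (F s) * |w s|))
      = ∫ t in Ioc (0:ℝ) L, ∫ s in Ioc (0:ℝ) L, Kfun (t, s) := by
    rw [intervalIntegral.integral_of_le hL]
    refine setIntegral_congr_fun measurableSet_Ioc (fun t ht => ?_)
    rw [intervalIntegral.integral_of_le (le_of_lt ht.1)]
    have e1 : ∫ s in Ioc (0:ℝ) t, σs t * (Real.exp (F s - F t) * |w s|)
        = σs t * (Real.exp (-F t) * ∫ s in Ioc (0:ℝ) t, Real.exp (F s) * |w s|) := by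
      rw [← MeasureTheory.integral_const_mul, ← MeasureTheory.integral_const_mul]
      refine setIntegral_congr_fun measurableSet_Ioc (fun s hs => ?_)
      rw [show F s - F t = -F t + F s by ring, Real.exp_add]; ring
    rw [← e1]
    have e2 : ∀ s : ℝ, Kfun (t, s)
        = (Iic t).indicator (fun s => σs t * (Real.exp (F s - F t) * |w s|)) s := hKapp t
    calc ∫ s in Ioc (0:ℝ) t, σs t * (Real.exp (F s - F t) * |w s|)
        = ∫ s in Ioc (0:ℝ) L ∩ Iic t, σs t * (Real.exp (F s - F t) * |w s|) := by
          rw [Ioc_inter_Iic, min_eq_right ht.2]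
      _ = ∫ s in Ioc (0:ℝ) L,
            (Iic t).indicator (fun s => σs t * (Real.exp (F s - F t) * |w s|)) s := by
          rw [setIntegral_indicator measurableSet_Iic]
      _ = ∫ s in Ioc (0:ℝ) L, Kfun (t, s) := by
          refine setIntegral_congr_fun measurableSet_Ioc (fun s _ => ?_)
          rw [e2 s]
  -- Fubini
  have hswap : (∫ t in Ioc (0:ℝ) L, ∫ s in Ioc (0:ℝ) L, Kfun (t, s))
      = ∫ s in Ioc (0:ℝ) L, ∫ t in Ioc (0:ℝ) L, Kfun (t, s) :=
    integral_integral_swap hKint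
  have hJint : Integrable (fun s => ∫ t in Ioc (0:ℝ) L, Kfun (t, s))
      (volume.restrict (Ioc 0 L)) := hKint.swap.integral_prod_left
  -- the pointwise bound for the swapped inner integral
  have hJbd : ∀ s ∈ Ioc (0:ℝ) L,
      (∫ t in Ioc (0:ℝ) L, Kfun (t, s)) ≤ (1 - Real.exp (-(M * L))) * |w s| := by
    intro s hs
    have hset : Ioc (0:ℝ) L ∩ Ici s = Icc s L := by
      ext t
      simp only [mem_inter_iff, mem_Ioc, mem_Ici, mem_Icc]
      constructor
      · rintro ⟨⟨_, h2⟩, h3⟩; exact ⟨h3, h2⟩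
      · rintro ⟨h1, h2⟩; exact ⟨⟨lt_of_lt_of_le hs.1 h1, h2⟩, h1⟩
    calc (∫ t in Ioc (0:ℝ) L, Kfun (t, s))
        = ∫ t in Ioc (0:ℝ) L,
            (Ici s).indicator (fun t => σs t * (Real.exp (F s - F t) * |w s|)) t := by
          refine setIntegral_congr_fun measurableSet_Ioc (fun t _ => ?_)
          rw [hKapp' s t]
      _ = ∫ t in Ioc (0:ℝ) L ∩ Ici s, σs t * (Real.exp (F s - F t) * |w s|) := by
          rw [setIntegral_indicator measurableSet_Ici]
      _ = ∫ t in Ioc s L, σs t * (Real.exp (F s - F t) * |w s|) := by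
          rw [hset, integral_Icc_eq_integral_Ioc]
      _ = ∫ t in Ioc s L, ρ t * (Real.exp (F s - F t) * |w s|) := by
          refine integral_congr_ae ?_
          have hae : ∀ᵐ t ∂(volume.restrict (Ioc s L)), σs t ≤ M :=
            ae_mono (Measure.restrict_mono
              (fun x hx => mem_Icc.mpr ⟨le_trans (le_of_lt hs.1) (le_of_lt hx.1), hx.2⟩) le_rfl) hM
          filter_upwards [hae, ae_restrict_mem measurableSet_Ioc] with t h2 h3
          have hmem : t ∈ Icc (0:ℝ) L := mem_Icc.mpr ⟨le_trans (le_of_lt hs.1) (le_of_lt h3.1), h3.2⟩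
          rw [hρdef, indicator_of_mem hmem, min_eq_left h2]
      _ = (∫ t in Ioc s L, ρ t * Real.exp (F s - F t)) * |w s| := by
          rw [← MeasureTheory.integral_mul_const]
          refine integral_congr_ae (Filter.Eventually.of_forall (fun t => by ring))
      _ ≤ (1 - Real.exp (-(M * L))) * |w s| := by
          refine mul_le_mul_of_nonneg_right ?_ (abs_nonneg _)
          have := key_bound ρ M s L hρm hρint hρ0 hρM (le_of_lt hs.1) hs.2
          simpa [hFdef] using this
  -- conclusion
  have hfinal : (∫ s in Ioc (0:ℝ) L, ∫ t in Ioc (0:ℝ) L, Kfun (t, s))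
      ≤ (1 - Real.exp (-(M * L))) * ∫ s in (0:ℝ)..L, |w s| := by
    rw [intervalIntegral.integral_of_le hL, ← MeasureTheory.integral_const_mul]
    refine integral_mono_ae hJint ((hwIoc.const_mul _)) ?_
    filter_upwards [ae_restrict_mem measurableSet_Ioc] with s hs
    exact hJbd s hs
  calc (∫ t in (0:ℝ)..L, σs t * ∫ s in (0:ℝ)..t, Real.exp (-(∫ r in s..t, σ r)) * |w s|)
      = ∫ t in (0:ℝ)..L, σs t * (Real.exp (-G t) * ∫ s in (0:ℝ)..t, Real.exp (G s) * |w s|) := hR1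
    _ ≤ ∫ t in (0:ℝ)..L, σs t * (Real.exp (-F t) * ∫ s in (0:ℝ)..t, Real.exp (F s) * |w s|) := hR2
    _ = ∫ t in Ioc (0:ℝ) L, ∫ s in Ioc (0:ℝ) L, Kfun (t, s) := hR3
    _ = ∫ s in Ioc (0:ℝ) L, ∫ t in Ioc (0:ℝ) L, Kfun (t, s) := hswap
    _ ≤ (1 - Real.exp (-(M * L))) * ∫ s in (0:ℝ)..L, |w s| := hfinal
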